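/- Let H be a conilpotent bialgebra over a field k of characteristic 0 and A a unital associative k-algebra. For f ∈ U(QSh(A), A) and φ ∈ U(H, A), set f ⊙ φ := f ∘ QSh(φ|_{H⁺}) ∘ ι ∈ U(H, A). Then: (i) j ⊙ φ = φ; (ii) for all f, g ∈ U(QSh(A), A), (f * g) ⊙ φ = (f ⊙ φ) * (g ⊙ φ), where * denotes convolution (in U(QSh(A), A) on the left, in U(H, A) on the right); (iii) ⊙ defines a left action of the monoid (U(QSh(A), A), ⊙) on U(H, A); and (iv) if A is commutative, f is a character of QSh(A) and φ a character of H, then f ⊙ φ is a character of H. -/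

import Mathlib

open scoped TensorProduct
open TensorProduct

noncomputable section

namespace QShPaper

variable (k : Type*) [Field k]

/-! ### Convolution algebra of linear maps from a coalgebra to an algebra -/

section Conv

variable {Q : Type*} [AddCommGroup Q] [Module k Q]
variable (A : Type*) [Ring A] [Algebra k A]

/-- The convolution product `f * g := m_A ∘ (f ⊗ g) ∘ Δ` associated to a
comultiplication `com` on `Q`. -/
def conv (com : Q →ₗ[k] Q ⊗[k] Q) (f g : Q →ₗ[k] A) : Q →ₗ[k] A :=
  LinearMap.mul' k A ∘ₗ TensorProduct.map f g ∘ₗ com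

/-- The unit `u_A ∘ η` of the convolution product. -/
def convUnit (cou : Q →ₗ[k] k) : Q →ₗ[k] A := Algebra.linearMap k A ∘ₗ cou

/-- Convolution powers `f^{*n}`, with `f^{*0}` the convolution unit. -/
def convPow (com : Q →ₗ[k] Q ⊗[k] Q) (cou : Q →ₗ[k] k) (f : Q →ₗ[k] A) : ℕ → (Q →ₗ[k] A)
  | 0 => convUnit k A cou
  | n + 1 => conv k A com f (convPow com cou f n)

end Conv

/-! ### Iterated (reduced) coproducts, conilpotency -/

section Red

variable {Q : Type*} [AddCommGroup Q] [Module k Q]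

/-- `Q ≃ Q^{⊗1}`. -/
def toPow1 : Q ≃ₗ[k] ⨂[k]^1 Q := (PiTensorProduct.subsingletonEquiv (s := fun _ : Fin 1 => Q) (0 : Fin 1)).symm

variable (one : Q) (com : Q →ₗ[k] Q ⊗[k] Q)

/-- The reduced coproduct `Δ'(h) := Δ(h) − 1 ⊗ h − h ⊗ 1`. -/
def redComul : Q →ₗ[k] Q ⊗[k] Q :=
  com - TensorProduct.mk k Q Q one - (TensorProduct.mk k Q Q).flip one

/-- Iterated reduced coproducts: `redIter n = Δ'^{[n+1]} : Q → Q^{⊗(n+1)}`,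
with `Δ'^{[1]} = Id` and `Δ'^{[n+1]} = (Id ⊗ Δ'^{[n]}) ∘ Δ'`. -/
def redIter : (n : ℕ) → Q →ₗ[k] ⨂[k]^(n+1) Q
  | 0 => (toPow1 k).toLinearMap
  | n + 1 =>
      (TensorPower.cast k Q (show 1 + (n+1) = n+1+1 by omega)).toLinearMap ∘ₗ
        (TensorPower.mulEquiv (R := k) (M := Q) (n := 1) (m := n+1)).toLinearMap ∘ₗ
          TensorProduct.map (toPow1 k).toLinearMap (redIter n) ∘ₗ redComul k one com

/-- Iterated coproducts: `fullIter n = Δ^{[n+1]} : Q → Q^{⊗(n+1)}`,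
with `Δ^{[1]} = Id` and `Δ^{[n+1]} = (Id ⊗ Δ^{[n]}) ∘ Δ`. -/
def fullIter : (n : ℕ) → Q →ₗ[k] ⨂[k]^(n+1) Q
  | 0 => (toPow1 k).toLinearMap
  | n + 1 =>
      (TensorPower.cast k Q (show 1 + (n+1) = n+1+1 by omega)).toLinearMap ∘ₗ
        (TensorPower.mulEquiv (R := k) (M := Q) (n := 1) (m := n+1)).toLinearMap ∘ₗ
          TensorProduct.map (toPow1 k).toLinearMap (fullIter n) ∘ₗ com

/-- A (coaugmented) coalgebra is (locally) conilpotent if every element of the kernel of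
the counit. is annihilated by some iterated reduced coproduct. -/
def IsConilpotent (cou : Q →ₗ[k] k) : Prop :=
  ∀ x ∈ LinearMap.ker cou, ∃ n, redIter k one com n x = 0

end Red

/-- `m_A^{[n]} ∘ f^{⊗n} : H^{⊗n} → A`. -/
def prodPow {H : Type*} [AddCommGroup H] [Module k H] (A : Type*) [Ring A] [Algebra k A]
    (f : H →ₗ[k] A) (n : ℕ) : (⨂[k]^n H) →ₗ[k] A :=
  PiTensorProduct.lift ((MultilinearMap.mkPiAlgebraFin k n A).compLinearMap fun _ => f)


/-- A model of the quasi-shuffle Hopf algebra `QSh(A) = ⊕_{n≥0} A^{⊗n}` over a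
(possibly non-unital) associative algebra `A`: `emp` is the empty word, `cons` is
prepending of a letter, `mul` is the quasi-shuffle product `⧢`, `comul` the
deconcatenation coproduct and `counit` the counit. -/
structure QShModel (A Q : Type*) [NonUnitalRing A] [Module k A]
    [SMulCommClass k A A] [IsScalarTower k A A] [AddCommGroup Q] [Module k Q] where
  emp : Q
  cons : A →ₗ[k] Q →ₗ[k] Q
  mul : Q →ₗ[k] Q →ₗ[k] Q
  comul : Q →ₗ[k] Q ⊗[k] Q
  counit : Q →ₗ[k] k
  /-- words span `QSh(A)` -/
  span_words : Submodule.span k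
    (Set.range fun w : List A => w.foldr (fun a u => cons a u) emp) = ⊤
  /-- `QSh(A) ≅ k ⊕ (A ⊗ QSh(A))` via `(c, a ⊗ u) ↦ c • 1 + a·u` -/
  theta_bij : Function.Bijective
    ((LinearMap.toSpanSingleton k Q emp).coprod (TensorProduct.lift cons))
  mul_emp_left : ∀ u, mul emp u = u
  mul_emp_right : ∀ u, mul u emp = u
  /-- the quasi-shuffle recursion `av ⧢ bw = a(v ⧢ bw) + b(av ⧢ w) + (a·_A b)(v ⧢ w)` -/
  mul_cons : ∀ (a b : A) (v w : Q),
    mul (cons a v) (cons b w) =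
      cons a (mul v (cons b w)) + cons b (mul (cons a v) w) + cons (a * b) (mul v w)
  comul_emp : comul emp = emp ⊗ₜ[k] emp
  /-- the deconcatenation recursion -/
  comul_cons : ∀ (a : A) (u : Q),
    comul (cons a u) = emp ⊗ₜ[k] (cons a u) + (TensorProduct.map (cons a) LinearMap.id) (comul u)
  counit_emp : counit emp = 1
  counit_cons : ∀ (a : A) (u : Q), counit (cons a u) = 0

namespace QShModel

variable {k}
variable {A Q : Type*} [NonUnitalRing A] [Module k A]
    [SMulCommClass k A A] [IsScalarTower k A A] [AddCommGroup Q] [Module k Q]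

/-- The word `a_1…a_n ∈ QSh(A)`. -/
def ofWord (M : QShModel k A Q) (w : List A) : Q := w.foldr (fun a u => M.cons a u) M.emp

/-- The collapse `H^{⊗(n+1)} → QSh(A)`, `x_1 ⊗ … ⊗ x_{n+1} ↦ c(x_1)…c(x_{n+1})`
(a word of length `n+1`) induced by a linear map `c : H → A`. -/
def wordMap (M : QShModel k A Q) {H : Type*} [AddCommGroup H] [Module k H]
    (c : H →ₗ[k] A) : (n : ℕ) → (⨂[k]^(n+1) H) →ₗ[k] Q
  | 0 => ((M.cons ∘ₗ c).flip M.emp) ∘ₗ (toPow1 k).symm.toLinearMap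
  | n + 1 =>
      TensorProduct.lift (M.cons ∘ₗ c) ∘ₗ
        TensorProduct.map (toPow1 k).symm.toLinearMap (M.wordMap c n) ∘ₗ
          (TensorPower.mulEquiv (R := k) (M := H) (n := 1) (m := n+1)).symm.toLinearMap ∘ₗ
            (TensorPower.cast k H (show n+1+1 = 1+(n+1) by omega)).toLinearMap

/-- `Ψ = QSh(c) ∘ ι : H → QSh(A)`, i.e. `Ψ(1) = 1` and, for `h` in the kernel of the
counit, `Ψ(h) = Σ_{n≥1} c^{⊗n}(Δ'^{[n]}(h))` (a finite sum, each term being viewed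
as a word of length `n`). -/
def IotaComp (M : QShModel k A Q) {H : Type*} [AddCommGroup H] [Module k H]
    (oneH : H) (com : H →ₗ[k] H ⊗[k] H) (cou : H →ₗ[k] k)
    (c : H →ₗ[k] A) (Ψ : H →ₗ[k] Q) : Prop :=
  Ψ oneH = M.emp ∧
    ∀ h ∈ LinearMap.ker cou, ∃ N, ∀ n ≥ N,
      Ψ h = ∑ i ∈ Finset.range (n+1), M.wordMap c i (redIter k oneH com i h)

end QShModel
end QShPaper

namespace QShPaper

/-- The distinguished element `j ∈ U(QSh(A), A)`: `j(1) = 1_A`, `j(a) = a` on letters, and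
`j` vanishes on words of length `≥ 2`. -/
def QShModel.IsJ {k : Type*} [Field k] {A Q : Type*} [Ring A] [Algebra k A]
    [AddCommGroup Q] [Module k Q] (M : QShModel k A Q) (j : Q →ₗ[k] A) : Prop :=
  j M.emp = 1 ∧ (∀ a : A, j (M.cons a M.emp) = a) ∧
    ∀ (a b : A) (u : Q), j (M.cons a (M.cons b u)) = 0

end QShPaper

namespace QShAux

variable {k : Type*} [Field k]

section Sub2

variable {V W B C : Type*} [AddCommGroup V] [Module k V] [AddCommGroup W] [Module k W]
  [AddCommGroup B] [Module k B] [AddCommGroup C] [Module k C]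

/-- The image of `S ⊗ T` inside `V ⊗ W`. -/
def sub2 (S : Submodule k V) (T : Submodule k W) : Submodule k (V ⊗[k] W) :=
  Submodule.span k {t | ∃ x ∈ S, ∃ y ∈ T, x ⊗ₜ[k] y = t}

lemma tmul_mem_sub2 {S : Submodule k V} {T : Submodule k W} {x : V} {y : W}
    (hx : x ∈ S) (hy : y ∈ T) : x ⊗ₜ[k] y ∈ sub2 S T :=
  Submodule.subset_span ⟨x, hx, y, hy, rfl⟩

lemma sub2_mono {S S' : Submodule k V} {T T' : Submodule k W} (hS : S ≤ S') (hT : T ≤ T') :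
    sub2 S T ≤ sub2 S' T' :=
  Submodule.span_mono (fun _t ⟨x, hx, y, hy, h⟩ => ⟨x, hS hx, y, hT hy, h⟩)

lemma sub2_induction {S : Submodule k V} {T : Submodule k W} {p : V ⊗[k] W → Prop}
    {t : V ⊗[k] W} (ht : t ∈ sub2 S T)
    (mem : ∀ x ∈ S, ∀ y ∈ T, p (x ⊗ₜ[k] y)) (zero : p 0)
    (add : ∀ s t, p s → p t → p (s + t)) (smul : ∀ (c : k) t, p t → p (c • t)) : p t := by
  refine Submodule.span_induction (p := fun t _ => p t) ?_ zero
    (fun s t _ _ hs ht => add s t hs ht) (fun c t _ h => smul c t h) ht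
  rintro t ⟨x, hx, y, hy, rfl⟩
  exact mem x hx y hy

lemma apply_eq_zero_of_sub2 {S : Submodule k V} {T : Submodule k W} {t : V ⊗[k] W}
    (ht : t ∈ sub2 S T) (L : V ⊗[k] W →ₗ[k] B)
    (h : ∀ x ∈ S, ∀ y ∈ T, L (x ⊗ₜ[k] y) = 0) : L t = 0 :=
  sub2_induction (p := fun t => L t = 0) ht h (map_zero L)
    (fun s t hs ht => show L (s + t) = 0 by
      rw [map_add, show L s = 0 from hs, show L t = 0 from ht, add_zero])
    (fun c t h => show L (c • t) = 0 by rw [map_smul, show L t = 0 from h, smul_zero])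

lemma apply_eq_of_sub2 {S : Submodule k V} {T : Submodule k W} {t : V ⊗[k] W}
    (ht : t ∈ sub2 S T) (L L' : V ⊗[k] W →ₗ[k] B)
    (h : ∀ x ∈ S, ∀ y ∈ T, L (x ⊗ₜ[k] y) = L' (x ⊗ₜ[k] y)) : L t = L' t := by
  have := apply_eq_zero_of_sub2 ht (L - L') (fun x hx y hy => by
    simp only [LinearMap.sub_apply, h x hx y hy, sub_self])
  have h2 : L t - L' t = 0 := by simpa using this
  exact sub_eq_zero.mp h2

lemma map_subtype_mem_sub2 (S : Submodule k V) (T : Submodule k W)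
    (r : S ⊗[k] T) : (TensorProduct.map S.subtype T.subtype) r ∈ sub2 S T := by
  induction r using TensorProduct.induction_on with
  | zero => exact (sub2 S T).zero_mem
  | tmul x y => exact tmul_mem_sub2 x.2 y.2
  | add a b ha hb => rw [map_add]; exact (sub2 _ _).add_mem ha hb

/-- Membership in `sub2` of kernels, from vanishing of the two partial tensorings. -/
lemma mem_sub2_ker (f : V →ₗ[k] B) (g : W →ₗ[k] C) (t : V ⊗[k] W)
    (h1 : f.rTensor W t = 0) (h2 : g.lTensor V t = 0) :
    t ∈ sub2 (LinearMap.ker f) (LinearMap.ker g) := by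
  set Kf := LinearMap.ker f
  set Kg := LinearMap.ker g
  have e1 : Function.Exact (Kf.subtype.rTensor W) (f.rTensor W) :=
    Module.Flat.rTensor_exact W (LinearMap.exact_subtype_ker_map f)
  obtain ⟨s, hs⟩ := (e1 t).mp h1
  have e2 : Function.Exact (Kg.subtype.lTensor Kf) (g.lTensor Kf) :=
    Module.Flat.lTensor_exact Kf (LinearMap.exact_subtype_ker_map g)
  have hinj : Function.Injective (Kf.subtype.rTensor C) :=
    Module.Flat.rTensor_preserves_injective_linearMap _ (Submodule.injective_subtype _)
  have key : (g.lTensor V).comp (Kf.subtype.rTensor W)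
      = (Kf.subtype.rTensor C).comp (g.lTensor Kf) := by
    rw [LinearMap.lTensor_comp_rTensor, LinearMap.rTensor_comp_lTensor]
  have h3 : g.lTensor Kf s = 0 := by
    apply hinj
    have hk := LinearMap.congr_fun key s
    simp only [LinearMap.comp_apply] at hk
    rw [hs] at hk
    rw [map_zero, ← hk, h2]
  obtain ⟨r, hr⟩ := (e2 s).mp h3
  have : t = (TensorProduct.map Kf.subtype Kg.subtype) r := by
    rw [← hs, ← hr, ← LinearMap.comp_apply, LinearMap.rTensor_comp_lTensor]
  rw [this]
  exact map_subtype_mem_sub2 Kf Kg r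

end Sub2
end QShAux
namespace QShPaper
namespace Aux
open QShAux

variable {k : Type*} [Field k]

section Generic

variable {V : Type*} [AddCommGroup V] [Module k V]
variable {A Q : Type*} [Ring A] [Algebra k A] [AddCommGroup Q] [Module k Q]

lemma redComul_apply (one : V) (com : V →ₗ[k] V ⊗[k] V) (h : V) :
    redComul k one com h = com h - one ⊗ₜ[k] h - h ⊗ₜ[k] one := by
  simp [redComul, TensorProduct.mk_apply]

variable (one : V) (com : V →ₗ[k] V ⊗[k] V) (cou : V →ₗ[k] k)

section CounitAxioms

variable (hL : cou.rTensor V ∘ₗ com = TensorProduct.mk k k V 1)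
  (hR : cou.lTensor V ∘ₗ com = (TensorProduct.mk k V k).flip 1)
  (hone : cou one = 1)

include hL hone in
lemma rTensor_cou_redComul {h : V} (hh : h ∈ LinearMap.ker cou) :
    cou.rTensor V (redComul k one com h) = 0 := by
  have h1 : cou.rTensor V (com h) = (1 : k) ⊗ₜ[k] h := by
    simpa using LinearMap.congr_fun hL h
  rw [redComul_apply, map_sub, map_sub, h1, LinearMap.rTensor_tmul, LinearMap.rTensor_tmul,
    hone, LinearMap.mem_ker.mp hh, TensorProduct.zero_tmul, sub_zero, sub_self]

include hR hone in
lemma lTensor_cou_redComul {h : V} (hh : h ∈ LinearMap.ker cou) :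
    cou.lTensor V (redComul k one com h) = 0 := by
  have h1 : cou.lTensor V (com h) = h ⊗ₜ[k] (1 : k) := by
    simpa using LinearMap.congr_fun hR h
  rw [redComul_apply, map_sub, map_sub, h1, LinearMap.lTensor_tmul, LinearMap.lTensor_tmul,
    hone, LinearMap.mem_ker.mp hh, TensorProduct.tmul_zero, sub_zero, sub_self]

include hL hR hone in
lemma redComul_mem_sub2 {h : V} (hh : h ∈ LinearMap.ker cou) :
    redComul k one com h ∈ sub2 (LinearMap.ker cou) (LinearMap.ker cou) :=
  mem_sub2_ker cou cou _ (rTensor_cou_redComul one com cou hL hone hh)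
    (lTensor_cou_redComul one com cou hR hone hh)

lemma lTensor_prod_eq_zero {W B C : Type*} [AddCommGroup W] [Module k W]
    [AddCommGroup B] [Module k B] [AddCommGroup C] [Module k C]
    (f : W →ₗ[k] B) (g : W →ₗ[k] C) (t : V ⊗[k] W)
    (h1 : f.lTensor V t = 0) (h2 : g.lTensor V t = 0) : (f.prod g).lTensor V t = 0 := by
  have key : (TensorProduct.prodRight k k V B C).toLinearMap ∘ₗ (f.prod g).lTensor V
      = (f.lTensor V).prod (g.lTensor V) := by
    apply TensorProduct.ext'
    intro x y
    simp [TensorProduct.prodRight_tmul]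
  have h3 := LinearMap.congr_fun key t
  simp only [LinearMap.comp_apply, LinearMap.prod_apply, Function.prod, h1, h2] at h3
  have h4 : (TensorProduct.prodRight k k V B C) ((f.prod g).lTensor V t)
      = (TensorProduct.prodRight k k V B C) 0 := by
    rw [map_zero]; exact h3
  exact (TensorProduct.prodRight k k V B C).injective h4

include hL hR hone in
lemma redComul_mem_sub2_redIter {h : V} (hh : h ∈ LinearMap.ker cou) (n : ℕ)
    (h0 : redIter k one com (n + 1) h = 0) :
    redComul k one com h ∈
      sub2 (LinearMap.ker cou) (LinearMap.ker cou ⊓ LinearMap.ker (redIter k one com n)) := by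
  have h3 : (redIter k one com n).lTensor V (redComul k one com h) = 0 := by
    have h0' : (TensorProduct.map (toPow1 k).toLinearMap (redIter k one com n))
        (redComul k one com h) = 0 := by
      have : redIter k one com (n + 1) h
          = (TensorPower.cast k V (show 1 + (n+1) = n+1+1 by omega))
            ((TensorPower.mulEquiv (R := k) (M := V) (n := 1) (m := n+1))
              ((TensorProduct.map (toPow1 k).toLinearMap (redIter k one com n))
                (redComul k one com h))) := rfl
      rw [this] at h0
      rw [LinearEquiv.map_eq_zero_iff, LinearEquiv.map_eq_zero_iff] at h0
      exact h0
    have hinj : Function.Injective (((toPow1 k).toLinearMap :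
        V →ₗ[k] ⨂[k]^1 V).rTensor (⨂[k]^(n+1) V)) :=
      Module.Flat.rTensor_preserves_injective_linearMap _ (toPow1 k).injective
    apply hinj
    rw [map_zero, ← LinearMap.comp_apply, LinearMap.rTensor_comp_lTensor, h0']
  have := mem_sub2_ker cou (cou.prod (redIter k one com n)) (redComul k one com h)
    (rTensor_cou_redComul one com cou hL hone hh)
    (lTensor_prod_eq_zero cou (redIter k one com n) _
      (lTensor_cou_redComul one com cou hR hone hh) h3)
  rwa [LinearMap.ker_prod] at this

end CounitAxioms

/-- `W i = wordMap i ∘ redIter i : V → Q`. -/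
def wrd (M : QShModel k A Q) (c : V →ₗ[k] A) (i : ℕ) : V →ₗ[k] Q :=
  M.wordMap c i ∘ₗ redIter k one com i

lemma wrd_zero (M : QShModel k A Q) (c : V →ₗ[k] A) (h : V) :
    wrd one com M c 0 h = M.cons (c h) M.emp := by
  show M.wordMap c 0 (redIter k one com 0 h) = _
  show (((M.cons ∘ₗ c).flip M.emp) ∘ₗ (toPow1 k).symm.toLinearMap) ((toPow1 k) h) = _
  simp

lemma wrd_succ (M : QShModel k A Q) (c : V →ₗ[k] A) (i : ℕ) (h : V) :
    wrd one com M c (i + 1) h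
      = TensorProduct.lift (M.cons ∘ₗ c)
          ((wrd one com M c i).lTensor V (redComul k one com h)) := by
  show M.wordMap c (i+1) (redIter k one com (i+1) h) = _
  have e1 : redIter k one com (i+1) h
      = (TensorPower.cast k V (show 1 + (i+1) = i+1+1 by omega))
        ((TensorPower.mulEquiv (R := k) (M := V) (n := 1) (m := i+1))
          ((TensorProduct.map (toPow1 k).toLinearMap (redIter k one com i))
            (redComul k one com h))) := rfl
  have e2 : ∀ z, M.wordMap c (i+1) z
      = TensorProduct.lift (M.cons ∘ₗ c)
          ((TensorProduct.map (toPow1 k).symm.toLinearMap (M.wordMap c i))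
            ((TensorPower.mulEquiv (R := k) (M := V) (n := 1) (m := i+1)).symm
              ((TensorPower.cast k V (show i+1+1 = 1+(i+1) by omega)) z))) := fun z => rfl
  rw [e1, e2, TensorPower.cast_cast, TensorPower.cast_refl, LinearEquiv.refl_apply,
    LinearEquiv.symm_apply_apply]
  congr 1
  rw [← LinearMap.comp_apply, ← TensorProduct.map_comp]
  show (TensorProduct.map ((toPow1 k).symm.toLinearMap ∘ₗ (toPow1 k).toLinearMap)
    (M.wordMap c i ∘ₗ redIter k one com i)) (redComul k one com h) = _
  have : (toPow1 k (Q := V)).symm.toLinearMap ∘ₗ (toPow1 k).toLinearMap = LinearMap.id := by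
    ext v; simp
  rw [this]
  rfl

/-- partial sums `S n := ∑_{i ≤ n} wrd i`. -/
def psum (M : QShModel k A Q) (c : V →ₗ[k] A) (n : ℕ) : V →ₗ[k] Q :=
  ∑ i ∈ Finset.range (n + 1), wrd one com M c i

/-- The recursive characterization of `Ψ = QSh(c) ∘ ι`. -/
def GoodPair (M : QShModel k A Q) (c : V →ₗ[k] A) (Ψ : V →ₗ[k] Q) : Prop :=
  Ψ one = M.emp ∧ ∀ h ∈ LinearMap.ker cou,
    Ψ h = M.cons (c h) M.emp
      + TensorProduct.lift (M.cons ∘ₗ c) (Ψ.lTensor V (redComul k one com h))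

end Generic
end Aux
end QShPaper
namespace QShPaper
namespace Aux
open QShAux

variable {k : Type*} [Field k]

section Generic2

variable {V : Type*} [AddCommGroup V] [Module k V]
variable {A Q : Type*} [Ring A] [Algebra k A] [AddCommGroup Q] [Module k Q]
variable (one : V) (com : V →ₗ[k] V ⊗[k] V) (cou : V →ₗ[k] k)

lemma lTensor_sum {W B : Type*} [AddCommGroup W] [Module k W] [AddCommGroup B] [Module k B]
    (s : Finset ℕ) (f : ℕ → (W →ₗ[k] B)) :
    (∑ i ∈ s, f i).lTensor V = ∑ i ∈ s, (f i).lTensor V := by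
  rw [← LinearMap.coe_lTensorHom]
  exact map_sum (LinearMap.lTensorHom V) f s

lemma psum_apply (M : QShModel k A Q) (c : V →ₗ[k] A) (n : ℕ) (h : V) :
    psum one com M c n h = ∑ i ∈ Finset.range (n + 1), M.wordMap c i (redIter k one com i h) := by
  rw [psum, LinearMap.sum_apply]
  rfl

lemma peel_sum (M : QShModel k A Q) (c : V →ₗ[k] A) (n : ℕ) (h : V) :
    ∑ i ∈ Finset.range (n + 1), wrd one com M c i h
      = M.cons (c h) M.emp + TensorProduct.lift (M.cons ∘ₗ c)
          ((∑ i ∈ Finset.range n, wrd one com M c i).lTensor V (redComul k one com h)) := by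
  rw [Finset.sum_range_succ', wrd_zero, add_comm]
  congr 1
  rw [Finset.sum_congr rfl (fun i _ => wrd_succ one com M c i h), lTensor_sum,
    LinearMap.sum_apply, map_sum]

section Axioms

variable (hL : cou.rTensor V ∘ₗ com = TensorProduct.mk k k V 1)
  (hR : cou.lTensor V ∘ₗ com = (TensorProduct.mk k V k).flip 1)
  (hone : cou one = 1)

include hL hR hone in
lemma good_of_iotaComp (M : QShModel k A Q) (c : V →ₗ[k] A) (Ψ : V →ₗ[k] Q)
    (hi : M.IotaComp one com cou c Ψ) : GoodPair one com cou M c Ψ := by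
  refine ⟨hi.1, fun h hh => ?_⟩
  obtain ⟨N₁, hN₁⟩ := hi.2 h hh
  have hmem := redComul_mem_sub2 one com cou hL hR hone hh
  have hst : ∃ N₂, ∀ n ≥ N₂, (psum one com M c n).lTensor V (redComul k one com h)
      = Ψ.lTensor V (redComul k one com h) := by
    refine sub2_induction
      (p := fun t => ∃ N₂, ∀ n ≥ N₂, (psum one com M c n).lTensor V t = Ψ.lTensor V t)
      hmem ?_ ⟨0, fun n _ => by rw [map_zero, map_zero]⟩ ?_ ?_
    · intro x _ y hy
      obtain ⟨N, hN⟩ := hi.2 y hy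
      refine ⟨N, fun n hn => ?_⟩
      rw [LinearMap.lTensor_tmul, LinearMap.lTensor_tmul, psum_apply, ← hN n hn]
    · rintro s t ⟨N₁, h₁⟩ ⟨N₂, h₂⟩
      exact ⟨max N₁ N₂, fun n hn => by
        rw [map_add, map_add, h₁ n (le_trans (le_max_left _ _) hn),
          h₂ n (le_trans (le_max_right _ _) hn)]⟩
    · rintro a t ⟨N, hN⟩
      exact ⟨N, fun n hn => by rw [map_smul, map_smul, hN n hn]⟩
  obtain ⟨N₂, hN₂⟩ := hst
  have e0 : Ψ h = ∑ i ∈ Finset.range (max N₁ N₂ + 1 + 1), wrd one com M c i h := by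
    rw [hN₁ (max N₁ N₂ + 1) (le_trans (le_max_left _ _) (Nat.le_succ _))]; rfl
  have e1 : (∑ i ∈ Finset.range (max N₁ N₂ + 1), wrd one com M c i)
      = psum one com M c (max N₁ N₂) := rfl
  rw [e0, peel_sum, e1, hN₂ (max N₁ N₂) (le_max_right _ _)]

include hL hR hone in
lemma iotaComp_of_good (hcon : IsConilpotent k one com cou)
    (M : QShModel k A Q) (c : V →ₗ[k] A) (Ψ : V →ₗ[k] Q)
    (hg : GoodPair one com cou M c Ψ) : M.IotaComp one com cou c Ψ := by
  have claim : ∀ n, ∀ h ∈ LinearMap.ker cou, redIter k one com n h = 0 →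
      (∀ m ≥ n, redIter k one com m h = 0) ∧
        Ψ h = ∑ i ∈ Finset.range n, wrd one com M c i h := by
    intro n
    induction n with
    | zero =>
        intro h _ h0
        have hz : h = 0 := (toPow1 k (Q := V)).map_eq_zero_iff.mp h0
        subst hz
        exact ⟨fun m _ => map_zero _, by simp⟩
    | succ n ih =>
        intro h hh h0
        have hmem := redComul_mem_sub2_redIter one com cou hL hR hone hh n h0
        have tail : ∀ m ≥ n + 1, redIter k one com m h = 0 := by
          intro m hm
          obtain ⟨m', rfl⟩ : ∃ m', m = m' + 1 := ⟨m - 1, by omega⟩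
          have hm' : m' ≥ n := by omega
          have hz : (TensorProduct.map (toPow1 k).toLinearMap (redIter k one com m'))
              (redComul k one com h) = 0 := by
            refine apply_eq_zero_of_sub2 hmem _ ?_
            intro x _ y hy
            rw [TensorProduct.map_tmul, (ih y hy.1 hy.2).1 m' hm', TensorProduct.tmul_zero]
          have e : redIter k one com (m' + 1) h
              = (TensorPower.cast k V (show 1 + (m'+1) = m'+1+1 by omega))
                ((TensorPower.mulEquiv (R := k) (M := V) (n := 1) (m := m'+1))
                  ((TensorProduct.map (toPow1 k).toLinearMap (redIter k one com m'))
                    (redComul k one com h))) := rfl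
          rw [e, hz, map_zero, map_zero]
        refine ⟨tail, ?_⟩
        have hpeel := peel_sum one com M c n h
        have e2 : (∑ i ∈ Finset.range n, wrd one com M c i).lTensor V (redComul k one com h)
            = Ψ.lTensor V (redComul k one com h) := by
          refine apply_eq_of_sub2 hmem _ _ ?_
          intro x _ y hy
          rw [LinearMap.lTensor_tmul, LinearMap.lTensor_tmul]
          congr 1
          rw [LinearMap.sum_apply]
          exact (ih y hy.1 hy.2).2.symm
        rw [hg.2 h hh, ← e2, ← hpeel]
  refine ⟨hg.1, fun h hh => ?_⟩
  obtain ⟨n, hn⟩ := hcon h hh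
  refine ⟨n, fun m hm => ?_⟩
  have h2 := claim n h hh hn
  have e3 : ∑ i ∈ Finset.range (m + 1), M.wordMap c i (redIter k one com i h)
      = ∑ i ∈ Finset.range (m + 1), wrd one com M c i h := rfl
  rw [e3, h2.2]
  refine Finset.sum_subset (Finset.range_subset_range.mpr (by omega)) ?_
  intro i _ hi
  have hge : i ≥ n := by simpa using hi
  show M.wordMap c i (redIter k one com i h) = 0
  rw [h2.1 i hge, map_zero]

include hL hR hone in
lemma conil_induction (hcon : IsConilpotent k one com cou) (S : Submodule k V)
    (step : ∀ h ∈ LinearMap.ker cou,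
      redComul k one com h ∈ sub2 (LinearMap.ker cou) (LinearMap.ker cou ⊓ S) → h ∈ S) :
    LinearMap.ker cou ≤ S := by
  have claim : ∀ n, ∀ h ∈ LinearMap.ker cou, redIter k one com n h = 0 → h ∈ S := by
    intro n
    induction n with
    | zero =>
        intro h _ h0
        have hz : h = 0 := (toPow1 k (Q := V)).map_eq_zero_iff.mp h0
        subst hz; exact S.zero_mem
    | succ n ih =>
        intro h hh h0
        refine step h hh (sub2_mono le_rfl ?_
          (redComul_mem_sub2_redIter one com cou hL hR hone hh n h0))
        exact le_inf inf_le_left (fun y hy => ih y hy.1 hy.2)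
  intro h hh
  obtain ⟨n, hn⟩ := hcon h hh
  exact claim n h hh hn

end Axioms
end Generic2
end Aux
end QShPaper
namespace QShPaper
namespace Aux
open QShAux

variable {k : Type*} [Field k]

section HSide

variable {H : Type*} [Ring H] [Bialgebra k H]

local notation "Δ" => Coalgebra.comul (R := k) (A := H)
local notation "ε" => Coalgebra.counit (R := k) (A := H)

lemma H_hL : (ε).rTensor H ∘ₗ Δ = TensorProduct.mk k k H 1 :=
  Coalgebra.rTensor_counit_comp_comul

lemma H_hR : (ε).lTensor H ∘ₗ Δ = (TensorProduct.mk k H k).flip 1 :=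
  Coalgebra.lTensor_counit_comp_comul

lemma H_hone : (ε) (1 : H) = 1 := Bialgebra.counit_one

lemma H_comul_one : Δ (1 : H) = (1 : H) ⊗ₜ[k] 1 := by
  rw [Bialgebra.comul_one, Algebra.TensorProduct.one_def]

lemma H_redComul_one : redComul k (1 : H) Δ 1 = -((1 : H) ⊗ₜ[k] 1) := by
  rw [redComul_apply, H_comul_one]
  abel

lemma H_sub_counit_smul_mem (h : H) : h - (ε) h • 1 ∈ LinearMap.ker ε := by
  rw [LinearMap.mem_ker, map_sub, map_smul, H_hone, smul_eq_mul, mul_one, sub_self]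

/-- Two linear maps agreeing at `1` and on `ker ε` agree. -/
lemma H_ext_on_ker {B : Type*} [AddCommGroup B] [Module k B] (f g : H →ₗ[k] B)
    (h1 : f 1 = g 1) (h2 : ∀ h ∈ LinearMap.ker ε, f h = g h) : f = g := by
  apply LinearMap.ext
  intro h
  have hd : h = (ε) h • 1 + (h - (ε) h • 1) := by abel
  rw [hd, map_add, map_add, map_smul, map_smul, h1, h2 _ (H_sub_counit_smul_mem h)]

section AssocHelpers

variable {V : Type*} [AddCommGroup V] [Module k V]

lemma assoc_symm_lTensor_mk (one : V) (μ : V ⊗[k] V) :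
    (TensorProduct.assoc k V V V).symm ((TensorProduct.mk k V V one).lTensor V μ)
      = ((TensorProduct.mk k V V).flip one).rTensor V μ := by
  induction μ using TensorProduct.induction_on with
  | zero => simp
  | tmul x y => simp [TensorProduct.assoc_symm_tmul]
  | add s t hs ht => rw [map_add, map_add, hs, ht, map_add]

lemma assoc_symm_lTensor_mkflip (one : V) (μ : V ⊗[k] V) :
    (TensorProduct.assoc k V V V).symm (((TensorProduct.mk k V V).flip one).lTensor V μ)
      = ((TensorProduct.mk k (V ⊗[k] V) V).flip one) μ := by
  induction μ using TensorProduct.induction_on with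
  | zero => simp
  | tmul x y => simp [TensorProduct.assoc_symm_tmul]
  | add s t hs ht => rw [map_add, map_add, hs, ht, map_add]

lemma assoc_symm_one_tmul (one : V) (μ : V ⊗[k] V) :
    (TensorProduct.assoc k V V V).symm (one ⊗ₜ[k] μ)
      = (TensorProduct.mk k V V one).rTensor V μ := by
  induction μ using TensorProduct.induction_on with
  | zero => simp
  | tmul x y => simp [TensorProduct.assoc_symm_tmul]
  | add a b ha hb => rw [TensorProduct.tmul_add, map_add, ha, hb, map_add]

end AssocHelpers

/-- Coassociativity of the reduced coproduct. -/
lemma H_redComul_coassoc (h : H) :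
    (TensorProduct.assoc k H H H).symm
        ((redComul k (1 : H) Δ).lTensor H ((redComul k (1 : H) Δ) h))
      = (redComul k (1 : H) Δ).rTensor H ((redComul k (1 : H) Δ) h) := by
  set rc := redComul k (1 : H) Δ with hrc
  have hrca : ∀ v : H, rc v = Δ v - (1 : H) ⊗ₜ[k] v - v ⊗ₜ[k] (1 : H) :=
    fun v => redComul_apply 1 Δ v
  set μ := Δ h with hμ
  set X := (Δ).rTensor H μ with hX
  set P := (TensorProduct.mk k H H 1).rTensor H μ with hP
  set Qq := ((TensorProduct.mk k H H).flip 1).rTensor H μ with hQq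
  set Rr := μ ⊗ₜ[k] (1 : H) with hRr
  set a := ((1:H) ⊗ₜ[k] (1:H)) ⊗ₜ[k] h with ha
  set b := ((1:H) ⊗ₜ[k] h) ⊗ₜ[k] (1:H) with hb
  set cc := (h ⊗ₜ[k] (1:H)) ⊗ₜ[k] (1:H) with hcc
  have hlsub : rc.lTensor H = (Δ).lTensor H - (TensorProduct.mk k H H 1).lTensor H
      - ((TensorProduct.mk k H H).flip 1).lTensor H := by
    rw [hrc, redComul, LinearMap.lTensor_sub, LinearMap.lTensor_sub]
  have hrsub : rc.rTensor H = (Δ).rTensor H - (TensorProduct.mk k H H 1).rTensor H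
      - ((TensorProduct.mk k H H).flip 1).rTensor H := by
    rw [hrc, redComul, LinearMap.rTensor_sub, LinearMap.rTensor_sub]
  have hrc1 : rc (1 : H) = -((1:H) ⊗ₜ[k] (1:H)) := H_redComul_one
  have e4 : (TensorProduct.mk k H H 1).rTensor H (rc h) = P - a - b := by
    rw [hrca h, map_sub, map_sub, LinearMap.rTensor_tmul, LinearMap.rTensor_tmul,
      TensorProduct.mk_apply, TensorProduct.mk_apply, ← hμ, ← hP, ← ha, ← hb]
  have e1 : rc.lTensor H (rc h)
      = rc.lTensor H μ - (1:H) ⊗ₜ[k] (rc h) + h ⊗ₜ[k] ((1:H) ⊗ₜ[k] (1:H)) := by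
    conv_lhs => rw [hrca h]
    rw [map_sub, map_sub, LinearMap.lTensor_tmul, LinearMap.lTensor_tmul,
      hrc1, TensorProduct.tmul_neg, sub_neg_eq_add]
  have e2 : rc.lTensor H μ = (Δ).lTensor H μ - (TensorProduct.mk k H H 1).lTensor H μ
      - ((TensorProduct.mk k H H).flip 1).lTensor H μ := by
    rw [hlsub]; simp [LinearMap.sub_apply]
  have hco : (TensorProduct.assoc k H H H).symm ((Δ).lTensor H μ) = X := by
    rw [hμ, hX, hμ]
    exact Coalgebra.coassoc_symm_apply h
  have eL : (TensorProduct.assoc k H H H).symm (rc.lTensor H (rc h))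
      = X - Qq - Rr - (P - a - b) + cc := by
    rw [e1, e2, map_add, map_sub, map_sub, map_sub, hco,
      assoc_symm_lTensor_mk, assoc_symm_lTensor_mkflip, assoc_symm_one_tmul,
      TensorProduct.assoc_symm_tmul, e4]
    rfl
  have e5 : rc h ⊗ₜ[k] (1:H) = Rr - b - cc := by
    rw [hrca h, TensorProduct.sub_tmul, TensorProduct.sub_tmul]
  have eR : rc.rTensor H (rc h) = X - P - Qq + a - (Rr - b - cc) := by
    conv_lhs => rw [hrca h]
    rw [map_sub, map_sub, LinearMap.rTensor_tmul, LinearMap.rTensor_tmul,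
      hrc1, TensorProduct.neg_tmul, sub_neg_eq_add, e5]
    congr 1
    congr 1
    rw [hrsub]; simp [LinearMap.sub_apply]; rfl
  rw [eL, eR]
  abel

/-- The multiplicative identity for the partially-reduced coproduct
`Δ̃ x = Δ x - 1 ⊗ x`. -/
lemma H_tilde_mul (x y : H) :
    Δ (x * y) - (1:H) ⊗ₜ[k] (x * y)
      = (Δ x - (1:H) ⊗ₜ[k] x) * (Δ y - (1:H) ⊗ₜ[k] y)
        + ((1:H) ⊗ₜ[k] x) * (Δ y - (1:H) ⊗ₜ[k] y)
        + (Δ x - (1:H) ⊗ₜ[k] x) * ((1:H) ⊗ₜ[k] y) := by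
  have e : ((1:H) ⊗ₜ[k] x) * ((1:H) ⊗ₜ[k] y) = (1:H) ⊗ₜ[k] (x * y) := by
    rw [Algebra.TensorProduct.tmul_mul_tmul, one_mul]
  rw [Bialgebra.comul_mul, ← e]
  noncomm_ring

end HSide
end Aux
end QShPaper
namespace QShPaper
namespace Aux
open QShAux

variable {k : Type*} [Field k]

section QSide

variable {A Q : Type*} [Ring A] [Algebra k A] [AddCommGroup Q] [Module k Q]
variable (M : QShModel k A Q)

lemma M_ofWord_nil : M.ofWord ([] : List A) = M.emp := rfl

lemma M_ofWord_cons (a : A) (w : List A) : M.ofWord (a :: w) = M.cons a (M.ofWord w) := rfl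

lemma M_ext_words {B : Type*} [AddCommGroup B] [Module k B] (f g : Q →ₗ[k] B)
    (h : ∀ w : List A, f (M.ofWord w) = g (M.ofWord w)) : f = g := by
  apply LinearMap.ext
  intro u
  have hu : u ∈ Submodule.span k
      (Set.range fun w : List A => w.foldr (fun a u => M.cons a u) M.emp) := by
    rw [M.span_words]; trivial
  refine Submodule.span_induction (p := fun u _ => f u = g u) ?_ (by simp) ?_ ?_ hu
  · rintro u ⟨w, rfl⟩; exact h w
  · intro s t _ _ hs ht
    show f (s + t) = g (s + t)
    rw [map_add, map_add, show f s = g s from hs, show f t = g t from ht]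
  · intro c t _ hct
    show f (c • t) = g (c • t)
    rw [map_smul, map_smul, show f t = g t from hct]

lemma M_hL : M.counit.rTensor Q ∘ₗ M.comul = TensorProduct.mk k k Q 1 := by
  refine M_ext_words M _ _ ?_
  intro w
  cases w with
  | nil =>
      simp only [LinearMap.comp_apply, M_ofWord_nil, M.comul_emp, LinearMap.rTensor_tmul,
        M.counit_emp, TensorProduct.mk_apply]
  | cons a w =>
      have hz : M.counit.rTensor Q ∘ₗ TensorProduct.map (M.cons a) LinearMap.id
          = (0 : Q ⊗[k] Q →ₗ[k] k ⊗[k] Q) := by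
        apply TensorProduct.ext'
        intro x y
        simp [M.counit_cons, TensorProduct.zero_tmul]
      simp only [LinearMap.comp_apply, M_ofWord_cons, M.comul_cons, map_add,
        LinearMap.rTensor_tmul, M.counit_emp, TensorProduct.mk_apply]
      rw [← LinearMap.comp_apply, hz]
      simp

lemma M_hR : M.counit.lTensor Q ∘ₗ M.comul = (TensorProduct.mk k Q k).flip 1 := by
  refine M_ext_words M _ _ ?_
  intro w
  induction w with
  | nil =>
      simp only [LinearMap.comp_apply, M_ofWord_nil, M.comul_emp, LinearMap.lTensor_tmul,
        M.counit_emp, TensorProduct.mk_apply, LinearMap.flip_apply]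
  | cons a w ih =>
      have hcomm : M.counit.lTensor Q ∘ₗ TensorProduct.map (M.cons a) LinearMap.id
          = TensorProduct.map (M.cons a) LinearMap.id ∘ₗ M.counit.lTensor Q := by
        apply TensorProduct.ext'
        intro x y
        simp
      simp only [LinearMap.comp_apply, M_ofWord_cons, M.comul_cons, map_add,
        LinearMap.lTensor_tmul, M.counit_cons, TensorProduct.tmul_zero] at *
      rw [← LinearMap.comp_apply, hcomm]
      simp only [LinearMap.comp_apply, zero_add]
      rw [ih]
      simp [LinearMap.flip_apply, TensorProduct.mk_apply]

lemma M_counit_emp_one : M.counit M.emp = 1 := M.counit_emp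

/-- The submodule of `Q` spanned by all one-letter extensions. -/
def consSpan : Submodule k Q := Submodule.span k {u | ∃ a v, M.cons a v = u}

lemma cons_mem_consSpan (a : A) (v : Q) : M.cons a v ∈ consSpan M :=
  Submodule.subset_span ⟨a, v, rfl⟩

lemma counit_eq_zero_on_consSpan {u : Q} (hu : u ∈ consSpan M) : M.counit u = 0 := by
  refine Submodule.span_induction (p := fun u _ => M.counit u = 0) ?_ (map_zero _) ?_ ?_ hu
  · rintro u ⟨a, v, rfl⟩; exact M.counit_cons a v
  · intro s t _ _ hs ht
    show M.counit (s + t) = 0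
    rw [map_add, show M.counit s = 0 from hs, show M.counit t = 0 from ht, add_zero]
  · intro c t _ h
    show M.counit (c • t) = 0
    rw [map_smul, show M.counit t = 0 from h, smul_zero]

lemma j_cons_eq_zero {j : Q →ₗ[k] A} (hj : M.IsJ j) (a : A) {u : Q} (hu : u ∈ consSpan M) :
    j (M.cons a u) = 0 := by
  refine Submodule.span_induction (p := fun u _ => j (M.cons a u) = 0) ?_ ?_ ?_ ?_ hu
  · rintro u ⟨b, v, rfl⟩; exact hj.2.2 a b v
  · show j (M.cons a 0) = 0
    rw [map_zero, map_zero]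
  · intro s t _ _ hs ht
    show j (M.cons a (s + t)) = 0
    rw [map_add, map_add, show j (M.cons a s) = 0 from hs, show j (M.cons a t) = 0 from ht,
      add_zero]
  · intro c t _ h
    show j (M.cons a (c • t)) = 0
    rw [map_smul, map_smul, show j (M.cons a t) = 0 from h, smul_zero]

lemma lift_cons_mem_consSpan {V : Type*} [AddCommGroup V] [Module k V]
    (c : V →ₗ[k] A) (Ψ : V →ₗ[k] Q) (t : V ⊗[k] V) :
    TensorProduct.lift (M.cons ∘ₗ c) (Ψ.lTensor V t) ∈ consSpan M := by
  induction t using TensorProduct.induction_on with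
  | zero => rw [map_zero, map_zero]; exact (consSpan M).zero_mem
  | tmul x y =>
      rw [LinearMap.lTensor_tmul, TensorProduct.lift.tmul]
      exact cons_mem_consSpan M (c x) (Ψ y)
  | add s t hs ht => rw [map_add, map_add]; exact (consSpan M).add_mem hs ht

lemma LΨ_tmul {V : Type*} [AddCommGroup V] [Module k V]
    (c : V →ₗ[k] A) (Ψ : V →ₗ[k] Q) (x y : V) :
    TensorProduct.lift (M.cons ∘ₗ c) (Ψ.lTensor V (x ⊗ₜ[k] y)) = M.cons (c x) (Ψ y) := by
  rw [LinearMap.lTensor_tmul, TensorProduct.lift.tmul]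
  rfl

lemma DQ_emp : redComul k M.emp M.comul M.emp = -(M.emp ⊗ₜ[k] M.emp) := by
  rw [redComul_apply, M.comul_emp]
  abel

lemma DQ_cons (a : A) (u : Q) :
    redComul k M.emp M.comul (M.cons a u)
      = TensorProduct.map (M.cons a) LinearMap.id (redComul k M.emp M.comul u)
        + (M.cons a M.emp) ⊗ₜ[k] u := by
  rw [redComul_apply, redComul_apply, M.comul_cons, map_sub, map_sub,
    TensorProduct.map_tmul, TensorProduct.map_tmul]
  simp only [LinearMap.id_coe, id_eq]
  abel

lemma DQ_cons_emp (a : A) : redComul k M.emp M.comul (M.cons a M.emp) = 0 := by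
  rw [DQ_cons, DQ_emp, map_neg, TensorProduct.map_tmul]
  simp only [LinearMap.id_coe, id_eq]
  abel

end QSide
end Aux
end QShPaper
namespace QShPaper
namespace Aux
open QShAux

variable {k : Type*} [Field k]

section Morphism

variable {H : Type*} [Ring H] [Bialgebra k H]
variable {A Q : Type*} [Ring A] [Algebra k A] [AddCommGroup Q] [Module k Q]
variable (M : QShModel k A Q) (φ : H →ₗ[k] A) (Ψ : H →ₗ[k] Q)

local notation "Δ" => Coalgebra.comul (R := k) (A := H)
local notation "ε" => Coalgebra.counit (R := k) (A := H)

lemma psi_mem_consSpan (hg : GoodPair (1 : H) Δ ε M φ Ψ) {h : H}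
    (hh : h ∈ LinearMap.ker ε) : Ψ h ∈ consSpan M := by
  rw [hg.2 h hh]
  exact (consSpan M).add_mem (cons_mem_consSpan M _ _) (lift_cons_mem_consSpan M φ Ψ _)

/-- Part (i): `j ⊙ φ = φ`. -/
lemma j_comp_psi (hg : GoodPair (1 : H) Δ ε M φ Ψ) {j : Q →ₗ[k] A} (hj : M.IsJ j)
    (hφ : φ 1 = 1) : j ∘ₗ Ψ = φ := by
  refine H_ext_on_ker _ _ ?_ ?_
  · rw [LinearMap.comp_apply, hg.1, hj.1, hφ]
  · intro h hh
    rw [LinearMap.comp_apply, hg.2 h hh, map_add, hj.2.1 (φ h)]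
    have hmem := redComul_mem_sub2 (1 : H) Δ ε H_hL H_hR H_hone hh
    have hz : (j ∘ₗ TensorProduct.lift (M.cons ∘ₗ φ) ∘ₗ Ψ.lTensor H)
        (redComul k (1 : H) Δ h) = 0 := by
      refine apply_eq_zero_of_sub2 hmem _ ?_
      intro x _ y hy
      simp only [LinearMap.comp_apply]
      rw [LΨ_tmul]
      exact j_cons_eq_zero M hj (φ x) (psi_mem_consSpan M φ Ψ hg hy)
    rw [LinearMap.comp_apply, LinearMap.comp_apply] at hz
    rw [hz, add_zero]

lemma cross_lemma (x : H) (s : H ⊗[k] H) :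
    TensorProduct.map (TensorProduct.lift (M.cons ∘ₗ φ) ∘ₗ Ψ.lTensor H) Ψ
        ((TensorProduct.assoc k H H H).symm (x ⊗ₜ[k] s))
      = TensorProduct.map (M.cons (φ x) ∘ₗ Ψ) Ψ s := by
  induction s using TensorProduct.induction_on with
  | zero =>
      rw [TensorProduct.tmul_zero, LinearEquiv.map_zero, map_zero, map_zero]
  | tmul u v =>
      rw [TensorProduct.assoc_symm_tmul, TensorProduct.map_tmul, TensorProduct.map_tmul,
        LinearMap.comp_apply, LΨ_tmul]
      rfl
  | add s t hs ht => rw [TensorProduct.tmul_add, map_add, map_add, hs, ht, map_add]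

/-- The coalgebra-morphism property of `Ψ`, reduced-coproduct version. -/
lemma redComul_comp_psi (hcon : IsConilpotent k (1 : H) Δ ε)
    (hg : GoodPair (1 : H) Δ ε M φ Ψ) :
    redComul k M.emp M.comul ∘ₗ Ψ = TensorProduct.map Ψ Ψ ∘ₗ redComul k (1 : H) Δ := by
  set rcH := redComul k (1 : H) Δ with hrcH
  set DQ := redComul k M.emp M.comul with hDQdef
  set L := TensorProduct.lift (M.cons ∘ₗ φ) ∘ₗ Ψ.lTensor H with hLdef
  set ρ := (M.cons ∘ₗ φ).flip M.emp with hρ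
  have hρa : ∀ x : H, ρ x = M.cons (φ x) M.emp := fun x => rfl
  have hLt : ∀ x y : H, L (x ⊗ₜ[k] y) = M.cons (φ x) (Ψ y) := fun x y => LΨ_tmul M φ Ψ x y
  have hDQcons : ∀ (a : A) (u : Q), DQ (M.cons a u)
      = TensorProduct.map (M.cons a) LinearMap.id (DQ u) + (M.cons a M.emp) ⊗ₜ[k] u :=
    fun a u => DQ_cons M a u
  have hKS : LinearMap.ker ε ≤
      LinearMap.ker ((DQ ∘ₗ Ψ) - (TensorProduct.map Ψ Ψ ∘ₗ rcH)) := by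
    refine conil_induction (1 : H) Δ ε H_hL H_hR H_hone hcon _ ?_
    intro h hh hmem
    rw [LinearMap.mem_ker, LinearMap.sub_apply, LinearMap.comp_apply, LinearMap.comp_apply,
      sub_eq_zero]
    have hψ : Ψ h = M.cons (φ h) M.emp + L (rcH h) := hg.2 h hh
    have hDL : (DQ ∘ₗ L) (rcH h)
        = (TensorProduct.map ρ Ψ + TensorProduct.map L Ψ ∘ₗ
            ((TensorProduct.assoc k H H H).symm.toLinearMap ∘ₗ rcH.lTensor H)) (rcH h) := by
      refine apply_eq_of_sub2 (sub2_mono le_top le_rfl hmem) _ _ ?_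
      intro x _ y hy
      have hyS : DQ (Ψ y) = TensorProduct.map Ψ Ψ (rcH y) := by
        have h2 := LinearMap.mem_ker.mp hy.2
        rw [LinearMap.sub_apply, LinearMap.comp_apply, LinearMap.comp_apply,
          sub_eq_zero] at h2
        exact h2
      have e1 : (DQ ∘ₗ L) (x ⊗ₜ[k] y)
          = TensorProduct.map (M.cons (φ x) ∘ₗ Ψ) Ψ (rcH y) + ρ x ⊗ₜ[k] Ψ y := by
        rw [LinearMap.comp_apply, hLt x y, hDQcons, hyS, hρa]
        congr 1
        rw [← LinearMap.comp_apply (TensorProduct.map _ _), ← TensorProduct.map_comp,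
          LinearMap.id_comp]
      have e2 : (TensorProduct.map ρ Ψ + TensorProduct.map L Ψ ∘ₗ
            ((TensorProduct.assoc k H H H).symm.toLinearMap ∘ₗ rcH.lTensor H)) (x ⊗ₜ[k] y)
          = TensorProduct.map (M.cons (φ x) ∘ₗ Ψ) Ψ (rcH y) + ρ x ⊗ₜ[k] Ψ y := by
        rw [LinearMap.add_apply, TensorProduct.map_tmul, LinearMap.comp_apply,
          LinearMap.comp_apply, LinearMap.lTensor_tmul, hρa]
        rw [show ((TensorProduct.assoc k H H H).symm.toLinearMap) (x ⊗ₜ[k] rcH y)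
            = (TensorProduct.assoc k H H H).symm (x ⊗ₜ[k] rcH y) from rfl]
        rw [cross_lemma M φ Ψ x (rcH y), add_comm]
      rw [e1, e2]
    have hbB : TensorProduct.map Ψ Ψ (rcH h)
        = (TensorProduct.map ρ Ψ + TensorProduct.map L Ψ ∘ₗ rcH.rTensor H) (rcH h) := by
      refine apply_eq_of_sub2 (sub2_mono le_rfl le_top hmem) _ _ ?_
      intro x hx y _
      rw [TensorProduct.map_tmul, hg.2 x hx, TensorProduct.add_tmul, LinearMap.add_apply,
        TensorProduct.map_tmul, hρa, LinearMap.comp_apply, LinearMap.rTensor_tmul,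
        TensorProduct.map_tmul]
      rfl
    have hfin : (DQ ∘ₗ L) (rcH h) = TensorProduct.map Ψ Ψ (rcH h) := by
      rw [hDL, hbB, LinearMap.add_apply, LinearMap.add_apply]
      congr 1
      rw [LinearMap.comp_apply, LinearMap.comp_apply, LinearMap.comp_apply]
      congr 1
      exact H_redComul_coassoc h
    have hDQce : DQ (M.cons (φ h) M.emp) = 0 := DQ_cons_emp M (φ h)
    rw [hψ, map_add, hDQce, zero_add, ← LinearMap.comp_apply, hfin]
  have hone : (DQ ∘ₗ Ψ) 1 = (TensorProduct.map Ψ Ψ ∘ₗ rcH) 1 := by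
    have hrc1 : rcH (1 : H) = -((1 : H) ⊗ₜ[k] 1) := H_redComul_one
    rw [LinearMap.comp_apply, LinearMap.comp_apply, hg.1, hrc1, map_neg,
      TensorProduct.map_tmul, hg.1]
    exact DQ_emp M
  refine H_ext_on_ker _ _ hone ?_
  intro h hh
  have h3 := LinearMap.mem_ker.mp (hKS hh)
  rw [LinearMap.sub_apply, sub_eq_zero] at h3
  exact h3

/-- The coalgebra-morphism property of `Ψ`. -/
lemma comul_comp_psi (hcon : IsConilpotent k (1 : H) Δ ε)
    (hg : GoodPair (1 : H) Δ ε M φ Ψ) :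
    M.comul ∘ₗ Ψ = TensorProduct.map Ψ Ψ ∘ₗ Coalgebra.comul (R := k) (A := H) := by
  have hred := redComul_comp_psi M φ Ψ hcon hg
  apply LinearMap.ext
  intro h
  have h1 := LinearMap.congr_fun hred h
  rw [LinearMap.comp_apply, LinearMap.comp_apply] at h1 ⊢
  have e1 : M.comul (Ψ h) = redComul k M.emp M.comul (Ψ h) + M.emp ⊗ₜ[k] Ψ h
      + Ψ h ⊗ₜ[k] M.emp := by
    rw [redComul_apply]; abel
  have e2 : TensorProduct.map Ψ Ψ (Δ h)
      = TensorProduct.map Ψ Ψ (redComul k (1 : H) Δ h) + M.emp ⊗ₜ[k] Ψ h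
        + Ψ h ⊗ₜ[k] M.emp := by
    have e3 : Δ h = redComul k (1 : H) Δ h + (1 : H) ⊗ₜ[k] h + h ⊗ₜ[k] (1 : H) := by
      rw [redComul_apply]; abel
    rw [e3, map_add, map_add, TensorProduct.map_tmul, TensorProduct.map_tmul, hg.1]
  rw [e1, e2, h1]

/-- Part (ii). -/
lemma conv_comp_psi (hcon : IsConilpotent k (1 : H) Δ ε)
    (hg : GoodPair (1 : H) Δ ε M φ Ψ) (f g : Q →ₗ[k] A) :
    conv k A M.comul f g ∘ₗ Ψ
      = conv k A (Coalgebra.comul (R := k) (A := H)) (f ∘ₗ Ψ) (g ∘ₗ Ψ) := by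
  apply LinearMap.ext
  intro h
  show LinearMap.mul' k A (TensorProduct.map f g (M.comul (Ψ h)))
    = LinearMap.mul' k A (TensorProduct.map (f ∘ₗ Ψ) (g ∘ₗ Ψ) (Δ h))
  congr 1
  have h1 := LinearMap.congr_fun (comul_comp_psi M φ Ψ hcon hg) h
  rw [LinearMap.comp_apply, LinearMap.comp_apply] at h1
  rw [h1, ← LinearMap.comp_apply (TensorProduct.map f g), ← TensorProduct.map_comp]

/-- Part (iii): chaining. -/
lemma chain_good (hcon : IsConilpotent k (1 : H) Δ ε)
    (hg : GoodPair (1 : H) Δ ε M φ Ψ) (g : Q →ₗ[k] A) (Φg : Q →ₗ[k] Q)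
    (hgΦ : GoodPair M.emp M.comul M.counit M g Φg) :
    GoodPair (1 : H) Δ ε M (g ∘ₗ Ψ) (Φg ∘ₗ Ψ) := by
  constructor
  · rw [LinearMap.comp_apply, hg.1, hgΦ.1]
  · intro h hh
    have hΨmem : Ψ h ∈ LinearMap.ker M.counit :=
      LinearMap.mem_ker.mpr (counit_eq_zero_on_consSpan M (psi_mem_consSpan M φ Ψ hg hh))
    rw [LinearMap.comp_apply, hgΦ.2 (Ψ h) hΨmem]
    congr 1
    have h1 := LinearMap.congr_fun (redComul_comp_psi M φ Ψ hcon hg) h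
    rw [LinearMap.comp_apply, LinearMap.comp_apply] at h1
    rw [h1]
    have push : ∀ t : H ⊗[k] H,
        TensorProduct.lift (M.cons ∘ₗ g) (Φg.lTensor Q (TensorProduct.map Ψ Ψ t))
          = TensorProduct.lift (M.cons ∘ₗ (g ∘ₗ Ψ)) ((Φg ∘ₗ Ψ).lTensor H t) := by
      intro t
      induction t using TensorProduct.induction_on with
      | zero => simp
      | tmul x y =>
          rw [TensorProduct.map_tmul, LinearMap.lTensor_tmul, LinearMap.lTensor_tmul,
            TensorProduct.lift.tmul, TensorProduct.lift.tmul]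
          rfl
      | add s t hs ht => simp only [map_add, hs, ht]
    exact push _

end Morphism
end Aux
end QShPaper
namespace QShPaper
namespace Aux
open QShAux

variable {k : Type*} [Field k]

section Mult

variable {H : Type*} [Ring H] [Bialgebra k H]
variable {A Q : Type*} [Ring A] [Algebra k A] [AddCommGroup Q] [Module k Q]
variable (M : QShModel k A Q) (φ : H →ₗ[k] A) (Ψ : H →ₗ[k] Q)

local notation "Δ" => Coalgebra.comul (R := k) (A := H)
local notation "ε" => Coalgebra.counit (R := k) (A := H)

/-- `LL = QSh(φ)` applied to two-component pieces. -/
def LL : H ⊗[k] H →ₗ[k] Q := TensorProduct.lift (M.cons ∘ₗ φ) ∘ₗ Ψ.lTensor H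

lemma LL_tmul (x y : H) : LL M φ Ψ (x ⊗ₜ[k] y) = M.cons (φ x) (Ψ y) :=
  LΨ_tmul M φ Ψ x y

/-- third quasi-shuffle term. -/
def CB : (H ⊗[k] H) ⊗[k] (H ⊗[k] H) →ₗ[k] Q :=
  TensorProduct.lift M.cons ∘ₗ
    TensorProduct.map (LinearMap.mul' k A ∘ₗ TensorProduct.map φ φ)
      (TensorProduct.lift M.mul ∘ₗ TensorProduct.map Ψ Ψ) ∘ₗ
        (TensorProduct.tensorTensorTensorComm k H H H H).toLinearMap

/-- first quasi-shuffle term. -/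
def C1 : (H ⊗[k] H) ⊗[k] (H ⊗[k] H) →ₗ[k] Q :=
  TensorProduct.lift M.cons ∘ₗ
    TensorProduct.map φ (TensorProduct.lift M.mul ∘ₗ TensorProduct.map Ψ (LL M φ Ψ)) ∘ₗ
      (TensorProduct.assoc k H H (H ⊗[k] H)).toLinearMap

/-- second quasi-shuffle term. -/
def C2 : (H ⊗[k] H) ⊗[k] (H ⊗[k] H) →ₗ[k] Q :=
  TensorProduct.lift M.cons ∘ₗ
    TensorProduct.map φ (TensorProduct.lift M.mul ∘ₗ TensorProduct.map (LL M φ Ψ) Ψ) ∘ₗ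
      (TensorProduct.comm k H (H ⊗[k] H)).toLinearMap.lTensor H ∘ₗ
        (TensorProduct.assoc k H H (H ⊗[k] H)).toLinearMap ∘ₗ
          (TensorProduct.comm k (H ⊗[k] H) (H ⊗[k] H)).toLinearMap

lemma CB_tmul (a u b v : H) :
    CB M φ Ψ ((a ⊗ₜ[k] u) ⊗ₜ[k] (b ⊗ₜ[k] v))
      = M.cons (φ a * φ b) (M.mul (Ψ u) (Ψ v)) := by
  simp [CB, TensorProduct.tensorTensorTensorComm_tmul, TensorProduct.map_tmul,
    TensorProduct.lift.tmul, LinearMap.mul'_apply]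

lemma C1_tmul (a u : H) (t : H ⊗[k] H) :
    C1 M φ Ψ ((a ⊗ₜ[k] u) ⊗ₜ[k] t) = M.cons (φ a) (M.mul (Ψ u) (LL M φ Ψ t)) := by
  simp [C1, TensorProduct.assoc_tmul, TensorProduct.map_tmul, TensorProduct.lift.tmul]

lemma C2_tmul (s : H ⊗[k] H) (b v : H) :
    C2 M φ Ψ (s ⊗ₜ[k] (b ⊗ₜ[k] v)) = M.cons (φ b) (M.mul (LL M φ Ψ s) (Ψ v)) := by
  simp [C2, TensorProduct.comm_tmul, TensorProduct.assoc_tmul, TensorProduct.map_tmul,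
    TensorProduct.lift.tmul, LinearMap.lTensor_tmul]

/-- The quasi-shuffle recursion, lifted to two-component pieces. -/
lemma claim1 (s t : H ⊗[k] H) :
    M.mul (LL M φ Ψ s) (LL M φ Ψ t)
      = CB M φ Ψ (s ⊗ₜ[k] t) + C1 M φ Ψ (s ⊗ₜ[k] t) + C2 M φ Ψ (s ⊗ₜ[k] t) := by
  induction t using TensorProduct.induction_on with
  | zero => simp
  | add t t' ht ht' =>
      simp only [map_add, TensorProduct.tmul_add, ht, ht']
      abel
  | tmul b v =>
      induction s using TensorProduct.induction_on with
      | zero => simp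
      | add s s' hs hs' =>
          simp only [map_add, TensorProduct.add_tmul, LinearMap.add_apply, hs, hs']
          abel
      | tmul a u =>
          rw [LL_tmul, LL_tmul, CB_tmul, C1_tmul, C2_tmul, LL_tmul, LL_tmul,
            M.mul_cons (φ a) (φ b) (Ψ u) (Ψ v)]
          abel

lemma conv_both (hφm : ∀ x y : H, φ (x * y) = φ x * φ y)
    (P₁ P₂ : Submodule k H) (hP : ∀ u ∈ P₁, ∀ v ∈ P₂, Ψ (u * v) = M.mul (Ψ u) (Ψ v)) :
    ∀ s ∈ sub2 (⊤ : Submodule k H) P₁, ∀ t ∈ sub2 (⊤ : Submodule k H) P₂,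
      CB M φ Ψ (s ⊗ₜ[k] t) = LL M φ Ψ (s * t) := by
  intro s hs t ht
  have outer := apply_eq_of_sub2 hs
    (CB M φ Ψ ∘ₗ (TensorProduct.mk k (H ⊗[k] H) (H ⊗[k] H)).flip t)
    (LL M φ Ψ ∘ₗ LinearMap.mulRight k t) ?_
  · simpa using outer
  intro a _ u hu
  have inner := apply_eq_of_sub2 ht
    (CB M φ Ψ ∘ₗ TensorProduct.mk k (H ⊗[k] H) (H ⊗[k] H) (a ⊗ₜ[k] u))
    (LL M φ Ψ ∘ₗ LinearMap.mulLeft k (a ⊗ₜ[k] u)) ?_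
  · simpa using inner
  intro b _ v hv
  simp only [LinearMap.comp_apply, TensorProduct.mk_apply, LinearMap.mulLeft_apply]
  rw [CB_tmul, Algebra.TensorProduct.tmul_mul_tmul, LL_tmul, hφm, hP u hu v hv]

lemma conv_one (P₁ : Submodule k H) (y : H) (ty : H ⊗[k] H)
    (hy : ∀ u ∈ P₁, Ψ (u * y) = M.mul (Ψ u) (Ψ y)) (hLy : LL M φ Ψ ty = Ψ y) :
    ∀ s ∈ sub2 (⊤ : Submodule k H) P₁,
      C1 M φ Ψ (s ⊗ₜ[k] ty) = LL M φ Ψ (s * ((1 : H) ⊗ₜ[k] y)) := by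
  intro s hs
  have h := apply_eq_of_sub2 hs
    (C1 M φ Ψ ∘ₗ (TensorProduct.mk k (H ⊗[k] H) (H ⊗[k] H)).flip ty)
    (LL M φ Ψ ∘ₗ LinearMap.mulRight k ((1 : H) ⊗ₜ[k] y)) ?_
  · simpa using h
  intro a _ u hu
  simp only [LinearMap.comp_apply, TensorProduct.mk_apply, LinearMap.flip_apply,
    LinearMap.mulRight_apply]
  rw [C1_tmul, hLy, Algebra.TensorProduct.tmul_mul_tmul, mul_one, LL_tmul, hy u hu]

lemma conv_two (P₂ : Submodule k H) (x : H) (sx : H ⊗[k] H)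
    (hx : ∀ v ∈ P₂, Ψ (x * v) = M.mul (Ψ x) (Ψ v)) (hLx : LL M φ Ψ sx = Ψ x) :
    ∀ t ∈ sub2 (⊤ : Submodule k H) P₂,
      C2 M φ Ψ (sx ⊗ₜ[k] t) = LL M φ Ψ (((1 : H) ⊗ₜ[k] x) * t) := by
  intro t ht
  have h := apply_eq_of_sub2 ht
    (C2 M φ Ψ ∘ₗ TensorProduct.mk k (H ⊗[k] H) (H ⊗[k] H) sx)
    (LL M φ Ψ ∘ₗ LinearMap.mulLeft k ((1 : H) ⊗ₜ[k] x)) ?_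
  · simpa using h
  intro b _ v hv
  simp only [LinearMap.comp_apply, TensorProduct.mk_apply, LinearMap.mulLeft_apply]
  rw [C2_tmul, hLx, Algebra.TensorProduct.tmul_mul_tmul, one_mul, LL_tmul, hx v hv]

lemma psi_eq_LL_tilde (hg : GoodPair (1 : H) Δ ε M φ Ψ) {x : H}
    (hx : x ∈ LinearMap.ker ε) :
    Ψ x = LL M φ Ψ (Δ x - (1 : H) ⊗ₜ[k] x) := by
  have e1 : Δ x - (1 : H) ⊗ₜ[k] x = redComul k (1 : H) Δ x + x ⊗ₜ[k] (1 : H) := by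
    rw [redComul_apply]; abel
  rw [e1, map_add, LL_tmul, hg.1, hg.2 x hx, add_comm]
  rfl

lemma psi_mul_parts_left (hg : GoodPair (1 : H) Δ ε M φ Ψ) (c : k) {x₀ y : H}
    (hbase : Ψ (x₀ * y) = M.mul (Ψ x₀) (Ψ y)) :
    Ψ ((c • 1 + x₀) * y) = M.mul (Ψ (c • 1 + x₀)) (Ψ y) := by
  rw [add_mul, smul_mul_assoc, one_mul, map_add, map_smul, map_add, map_smul, hg.1,
    map_add, LinearMap.add_apply, map_smul, LinearMap.smul_apply, M.mul_emp_left, hbase]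

lemma psi_mul_parts_right (hg : GoodPair (1 : H) Δ ε M φ Ψ) (d : k) {x y₀ : H}
    (hbase : Ψ (x * y₀) = M.mul (Ψ x) (Ψ y₀)) :
    Ψ (x * (d • 1 + y₀)) = M.mul (Ψ x) (Ψ (d • 1 + y₀)) := by
  rw [mul_add, mul_smul_comm, mul_one, map_add, map_smul, map_add, map_smul, hg.1,
    map_add, map_smul, M.mul_emp_right, hbase]

/-- decomposition of members of `span{1} ⊔ (ker ε ⊓ ker redIterₘ)` -/
lemma pd_decomp (m : ℕ) {z : H}
    (hz : z ∈ Submodule.span k {(1 : H)} ⊔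
      (LinearMap.ker ε ⊓ LinearMap.ker (redIter k (1 : H) Δ m))) :
    ∃ (c : k) (z₀ : H), z = c • 1 + z₀ ∧ z₀ ∈ LinearMap.ker ε ∧
      redIter k (1 : H) Δ m z₀ = 0 := by
  obtain ⟨z₁, hz₁, z₂, hz₂, rfl⟩ := Submodule.mem_sup.mp hz
  obtain ⟨c, rfl⟩ := Submodule.mem_span_singleton.mp hz₁
  exact ⟨c, z₂, rfl, hz₂.1, LinearMap.mem_ker.mp hz₂.2⟩

end Mult
end Aux
end QShPaper
namespace QShPaper
namespace Aux
open QShAux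

variable {k : Type*} [Field k]

section MultMain

variable {H : Type*} [Ring H] [Bialgebra k H]
variable {A Q : Type*} [Ring A] [Algebra k A] [AddCommGroup Q] [Module k Q]
variable (M : QShModel k A Q) (φ : H →ₗ[k] A) (Ψ : H →ₗ[k] Q)

local notation "Δ" => Coalgebra.comul (R := k) (A := H)
local notation "ε" => Coalgebra.counit (R := k) (A := H)

lemma psi_mul_ker (hg : GoodPair (1 : H) Δ ε M φ Ψ)
    (hφm : ∀ x y : H, φ (x * y) = φ x * φ y) :
    ∀ n p q, p + q ≤ n →
      ∀ x, x ∈ LinearMap.ker ε → redIter k (1 : H) Δ p x = 0 →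
      ∀ y, y ∈ LinearMap.ker ε → redIter k (1 : H) Δ q y = 0 →
      Ψ (x * y) = M.mul (Ψ x) (Ψ y) := by
  intro n
  induction n with
  | zero =>
      intro p q hpq x hx hxp y hy hyq
      have hp0 : p = 0 := by omega
      subst hp0
      have hx0 : x = 0 := (toPow1 k (Q := H)).map_eq_zero_iff.mp hxp
      subst hx0
      simp
  | succ n ihn =>
      intro p q hpq x hx hxp y hy hyq
      rcases p with _ | p'
      · have hx0 : x = 0 := (toPow1 k (Q := H)).map_eq_zero_iff.mp hxp
        subst hx0; simp
      rcases q with _ | q'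
      · have hy0 : y = 0 := (toPow1 k (Q := H)).map_eq_zero_iff.mp hyq
        subst hy0; simp
      have hmx := redComul_mem_sub2_redIter (1 : H) Δ ε H_hL H_hR H_hone hx p' hxp
      have hmy := redComul_mem_sub2_redIter (1 : H) Δ ε H_hL H_hR H_hone hy q' hyq
      set Pd₁ := Submodule.span k {(1 : H)} ⊔
        (LinearMap.ker ε ⊓ LinearMap.ker (redIter k (1 : H) Δ p')) with hPd₁
      set Pd₂ := Submodule.span k {(1 : H)} ⊔
        (LinearMap.ker ε ⊓ LinearMap.ker (redIter k (1 : H) Δ q')) with hPd₂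
      have needUV : ∀ u ∈ Pd₁, ∀ v ∈ Pd₂, Ψ (u * v) = M.mul (Ψ u) (Ψ v) := by
        intro u hu v hv
        obtain ⟨c, u₀, rfl, hu₀, hu₀p⟩ := pd_decomp p' hu
        obtain ⟨d, v₀, rfl, hv₀, hv₀q⟩ := pd_decomp q' hv
        exact psi_mul_parts_left M φ Ψ hg c (psi_mul_parts_right M φ Ψ hg d
          (ihn p' q' (by omega) u₀ hu₀ hu₀p v₀ hv₀ hv₀q))
      have needY : ∀ u ∈ Pd₁, Ψ (u * y) = M.mul (Ψ u) (Ψ y) := by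
        intro u hu
        obtain ⟨c, u₀, rfl, hu₀, hu₀p⟩ := pd_decomp p' hu
        exact psi_mul_parts_left M φ Ψ hg c
          (ihn p' (q' + 1) (by omega) u₀ hu₀ hu₀p y hy hyq)
      have needX : ∀ v ∈ Pd₂, Ψ (x * v) = M.mul (Ψ x) (Ψ v) := by
        intro v hv
        obtain ⟨d, v₀, rfl, hv₀, hv₀q⟩ := pd_decomp q' hv
        exact psi_mul_parts_right M φ Ψ hg d
          (ihn (p' + 1) q' (by omega) x hx hxp v₀ hv₀ hv₀q)
      have hone_mem₁ : (1 : H) ∈ Pd₁ :=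
        le_sup_left (α := Submodule k H) (Submodule.mem_span_singleton_self _)
      have hone_mem₂ : (1 : H) ∈ Pd₂ :=
        le_sup_left (α := Submodule k H) (Submodule.mem_span_singleton_self _)
      have hDx : Δ x - (1 : H) ⊗ₜ[k] x ∈ sub2 (⊤ : Submodule k H) Pd₁ := by
        have e1 : Δ x - (1 : H) ⊗ₜ[k] x = redComul k (1 : H) Δ x + x ⊗ₜ[k] (1 : H) := by
          rw [redComul_apply]; abel
        rw [e1]
        exact Submodule.add_mem _ (sub2_mono le_top le_sup_right hmx)
          (tmul_mem_sub2 trivial hone_mem₁)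
      have hDy : Δ y - (1 : H) ⊗ₜ[k] y ∈ sub2 (⊤ : Submodule k H) Pd₂ := by
        have e1 : Δ y - (1 : H) ⊗ₜ[k] y = redComul k (1 : H) Δ y + y ⊗ₜ[k] (1 : H) := by
          rw [redComul_apply]; abel
        rw [e1]
        exact Submodule.add_mem _ (sub2_mono le_top le_sup_right hmy)
          (tmul_mem_sub2 trivial hone_mem₂)
      have hxyk : x * y ∈ LinearMap.ker ε := by
        rw [LinearMap.mem_ker, Bialgebra.counit_mul, LinearMap.mem_ker.mp hx, zero_mul]
      have hLx : LL M φ Ψ (Δ x - (1 : H) ⊗ₜ[k] x) = Ψ x :=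
        (psi_eq_LL_tilde M φ Ψ hg hx).symm
      have hLy : LL M φ Ψ (Δ y - (1 : H) ⊗ₜ[k] y) = Ψ y :=
        (psi_eq_LL_tilde M φ Ψ hg hy).symm
      calc Ψ (x * y) = LL M φ Ψ (Δ (x * y) - (1 : H) ⊗ₜ[k] (x * y)) :=
            psi_eq_LL_tilde M φ Ψ hg hxyk
        _ = LL M φ Ψ ((Δ x - (1:H) ⊗ₜ[k] x) * (Δ y - (1:H) ⊗ₜ[k] y))
            + LL M φ Ψ (((1:H) ⊗ₜ[k] x) * (Δ y - (1:H) ⊗ₜ[k] y))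
            + LL M φ Ψ ((Δ x - (1:H) ⊗ₜ[k] x) * ((1:H) ⊗ₜ[k] y)) := by
            rw [H_tilde_mul x y, map_add, map_add]
        _ = CB M φ Ψ ((Δ x - (1:H) ⊗ₜ[k] x) ⊗ₜ[k] (Δ y - (1:H) ⊗ₜ[k] y))
            + C2 M φ Ψ ((Δ x - (1:H) ⊗ₜ[k] x) ⊗ₜ[k] (Δ y - (1:H) ⊗ₜ[k] y))
            + C1 M φ Ψ ((Δ x - (1:H) ⊗ₜ[k] x) ⊗ₜ[k] (Δ y - (1:H) ⊗ₜ[k] y)) := by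
            rw [← conv_both M φ Ψ hφm Pd₁ Pd₂ needUV _ hDx _ hDy,
              ← conv_two M φ Ψ Pd₂ x _ needX hLx _ hDy,
              ← conv_one M φ Ψ Pd₁ y _ needY hLy _ hDx]
        _ = M.mul (LL M φ Ψ (Δ x - (1:H) ⊗ₜ[k] x)) (LL M φ Ψ (Δ y - (1:H) ⊗ₜ[k] y)) := by
            rw [claim1]; abel
        _ = M.mul (Ψ x) (Ψ y) := by rw [hLx, hLy]

lemma psi_mul_all (hcon : IsConilpotent k (1 : H) Δ ε)
    (hg : GoodPair (1 : H) Δ ε M φ Ψ)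
    (hφm : ∀ x y : H, φ (x * y) = φ x * φ y) (x y : H) :
    Ψ (x * y) = M.mul (Ψ x) (Ψ y) := by
  set x₀ := x - (ε) x • 1 with hx₀def
  set y₀ := y - (ε) y • 1 with hy₀def
  have hx₀ : x₀ ∈ LinearMap.ker ε := H_sub_counit_smul_mem x
  have hy₀ : y₀ ∈ LinearMap.ker ε := H_sub_counit_smul_mem y
  obtain ⟨p, hp⟩ := hcon x₀ hx₀
  obtain ⟨q, hq⟩ := hcon y₀ hy₀
  have base := psi_mul_ker M φ Ψ hg hφm (p + q) p q le_rfl x₀ hx₀ hp y₀ hy₀ hq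
  have hxe : x = (ε) x • 1 + x₀ := by rw [hx₀def]; abel
  have hye : y = (ε) y • 1 + y₀ := by rw [hy₀def]; abel
  rw [hxe, hye]
  exact psi_mul_parts_left M φ Ψ hg ((ε) x)
    (psi_mul_parts_right M φ Ψ hg ((ε) y) base)

end MultMain
end Aux
end QShPaper
open QShPaper in
/-- Let `H` be a conilpotent bialgebra and `A` a unital algebra. For
`f ∈ U(QSh(A), A)` and `φ ∈ U(H, A)` set `f ⊙ φ := f ∘ QSh(φ|_{H⁺}) ∘ ι ∈ U(H, A)`
(below, `M.IotaComp 1 Δ η φ Ψ` expresses that `Ψ = QSh(φ|_{H⁺}) ∘ ι`, so that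
`f ⊙ φ = f ∘ₗ Ψ`). Then (i) `j ⊙ φ = φ`; (ii) `(f * g) ⊙ φ = (f ⊙ φ) * (g ⊙ φ)`;
(iii) `⊙` is a left action of the monoid `(U(QSh(A), A), ⊙)` on `U(H, A)`; and
(iv) if `A` is commutative, `f` a character of `QSh(A)` and `φ` a character of `H`,
then `f ⊙ φ` is a character of `H`. -/
theorem stmt17_action_on_UHA
    (k : Type*) [Field k] [CharZero k]
    (H : Type*) [Ring H] [Bialgebra k H]
    (hconil : IsConilpotent k (1 : H) (Coalgebra.comul (R := k) (A := H))
      (Coalgebra.counit (R := k) (A := H)))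
    (A : Type*) [Ring A] [Algebra k A]
    (Q : Type*) [AddCommGroup Q] [Module k Q]
    (M : QShModel k A Q) (j : Q →ₗ[k] A) (hj : M.IsJ j) :
    -- `f ⊙ φ ∈ U(H, A)`
    (∀ (f : Q →ₗ[k] A) (φ : H →ₗ[k] A) (Ψ : H →ₗ[k] Q), f M.emp = 1 → φ 1 = 1 →
      M.IotaComp (1 : H) (Coalgebra.comul (R := k) (A := H))
          (Coalgebra.counit (R := k) (A := H)) φ Ψ →
        (f ∘ₗ Ψ) 1 = 1) ∧
    -- (i) `j ⊙ φ = φ`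
    (∀ (φ : H →ₗ[k] A) (Ψ : H →ₗ[k] Q), φ 1 = 1 →
      M.IotaComp (1 : H) (Coalgebra.comul (R := k) (A := H))
          (Coalgebra.counit (R := k) (A := H)) φ Ψ →
        j ∘ₗ Ψ = φ) ∧
    -- (ii) `(f * g) ⊙ φ = (f ⊙ φ) * (g ⊙ φ)`
    (∀ (f g : Q →ₗ[k] A) (φ : H →ₗ[k] A) (Ψ : H →ₗ[k] Q), φ 1 = 1 →
      M.IotaComp (1 : H) (Coalgebra.comul (R := k) (A := H))
          (Coalgebra.counit (R := k) (A := H)) φ Ψ →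
        (conv k A M.comul f g) ∘ₗ Ψ =
          conv k A (Coalgebra.comul (R := k) (A := H)) (f ∘ₗ Ψ) (g ∘ₗ Ψ)) ∧
    -- (iii) `(f ⊙ g) ⊙ φ = f ⊙ (g ⊙ φ)`: `Ψ_{g ⊙ φ} = Φ_g ∘ Ψ_φ`, so `⊙` is a left
    -- action of the monoid `(U(QSh(A),A), ⊙)` (with unit `j`, by (i))
    (∀ (g : Q →ₗ[k] A) (φ : H →ₗ[k] A) (Φg : Q →ₗ[k] Q) (Ψ : H →ₗ[k] Q),
      g M.emp = 1 → φ 1 = 1 →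
      M.IotaComp M.emp M.comul M.counit g Φg →
      M.IotaComp (1 : H) (Coalgebra.comul (R := k) (A := H))
          (Coalgebra.counit (R := k) (A := H)) φ Ψ →
      M.IotaComp (1 : H) (Coalgebra.comul (R := k) (A := H))
          (Coalgebra.counit (R := k) (A := H)) (g ∘ₗ Ψ) (Φg ∘ₗ Ψ)) ∧
    -- (iv) characters act on characters when `A` is commutative
    ((∀ x y : A, x * y = y * x) →
      ∀ (f : Q →ₗ[k] A) (φ : H →ₗ[k] A) (Ψ : H →ₗ[k] Q),
        f M.emp = 1 → (∀ u v : Q, f (M.mul u v) = f u * f v) →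
        φ 1 = 1 → (∀ x y : H, φ (x * y) = φ x * φ y) →
        M.IotaComp (1 : H) (Coalgebra.comul (R := k) (A := H))
            (Coalgebra.counit (R := k) (A := H)) φ Ψ →
        ((f ∘ₗ Ψ) 1 = 1 ∧
          ∀ x y : H, (f ∘ₗ Ψ) (x * y) = (f ∘ₗ Ψ) x * (f ∘ₗ Ψ) y)) := by
  open QShPaper.Aux QShAux in
  refine ⟨?_, ?_, ?_, ?_, ?_⟩
  · -- f ⊙ φ ∈ U(H, A)
    intro f φ Ψ hf hφ hi
    rw [LinearMap.comp_apply, hi.1, hf]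
  · -- (i)
    intro φ Ψ hφ hi
    exact Aux.j_comp_psi M φ Ψ
      (Aux.good_of_iotaComp (1 : H) (Coalgebra.comul) (Coalgebra.counit)
        Aux.H_hL Aux.H_hR Aux.H_hone M φ Ψ hi) hj hφ
  · -- (ii)
    intro f g φ Ψ hφ hi
    exact Aux.conv_comp_psi M φ Ψ hconil
      (Aux.good_of_iotaComp (1 : H) (Coalgebra.comul) (Coalgebra.counit)
        Aux.H_hL Aux.H_hR Aux.H_hone M φ Ψ hi) f g
  · -- (iii)
    intro g φ Φg Ψ hg1 hφ1 hiΦ hiφ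
    have hgφ := Aux.good_of_iotaComp (1 : H) (Coalgebra.comul) (Coalgebra.counit)
      Aux.H_hL Aux.H_hR Aux.H_hone M φ Ψ hiφ
    have hgΦ := Aux.good_of_iotaComp M.emp M.comul M.counit
      (Aux.M_hL M) (Aux.M_hR M) (Aux.M_counit_emp_one M) M g Φg hiΦ
    exact Aux.iotaComp_of_good (1 : H) (Coalgebra.comul) (Coalgebra.counit)
      Aux.H_hL Aux.H_hR Aux.H_hone hconil M (g ∘ₗ Ψ) (Φg ∘ₗ Ψ)
      (Aux.chain_good M φ Ψ hconil hgφ g Φg hgΦ)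
  · -- (iv)
    intro _hcomm f φ Ψ hf1 hfm hφ1 hφm hi
    have hgφ := Aux.good_of_iotaComp (1 : H) (Coalgebra.comul) (Coalgebra.counit)
      Aux.H_hL Aux.H_hR Aux.H_hone M φ Ψ hi
    constructor
    · rw [LinearMap.comp_apply, hgφ.1, hf1]
    · intro x y
      rw [LinearMap.comp_apply, LinearMap.comp_apply, LinearMap.comp_apply,
        Aux.psi_mul_all M φ Ψ hconil hgφ hφm x y, hfm]
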